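/- If a finite set of existential rules R is parallelised by a finite rule set R', then for every instance I, every null occurring in chase_∞(I,R) occurs in at most h atoms of chase_∞(I,R), where h is the maximal number of atoms in a rule head of R'. -/
import Mathlib


open scoped Classical
noncomputable section

namespace ER

/-- Terms: constants or variables (variables occurring in instances are called nulls). -/
inductive Term where
  | const : ℕ → Term
  | var : ℕ → Term
deriving DecidableEq

def Term.isConst : Term → Prop
  | .const _ => True
  | .var _ => False

/-- An atom `p(t₁,…,tₙ)`. -/
structure Atom where
  pred : ℕ
  args : List Term
deriving DecidableEq

def Atom.terms (a : Atom) : Set Term := {t | t ∈ a.args}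
def Atom.vars (a : Atom) : Set ℕ := {v | Term.var v ∈ a.args}

def termsOf (S : Set Atom) : Set Term := ⋃ a ∈ S, a.terms
def varsOf (S : Set Atom) : Set ℕ := ⋃ a ∈ S, a.vars
/-- The nulls (non-constant terms) occurring in a set of atoms. -/
def nullsOf (S : Set Atom) : Set Term := {t | t ∈ termsOf S ∧ ¬ t.isConst}

def Term.subst (σ : ℕ → Term) : Term → Term
  | .const c => .const c
  | .var v => σ v

def Atom.subst (σ : ℕ → Term) (a : Atom) : Atom := ⟨a.pred, a.args.map (Term.subst σ)⟩
def substSet (σ : ℕ → Term) (S : Set Atom) : Set Atom := (Atom.subst σ) '' S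

/-- A homomorphism from `S1` to `S2`: a substitution of variables by terms mapping `S1` into `S2`. -/
def isHom (σ : ℕ → Term) (S1 S2 : Set Atom) : Prop := substSet σ S1 ⊆ S2

/-- An injective homomorphism (injective on the terms of the source). -/
def isInjHom (σ : ℕ → Term) (S1 S2 : Set Atom) : Prop :=
  isHom σ S1 S2 ∧ Set.InjOn (Term.subst σ) (termsOf S1)

/-- An instance is a finite set of ground atoms. -/
def IsInstance (I : Set Atom) : Prop := I.Finite ∧ ∀ t ∈ termsOf I, t.isConst

/-- An existential rule, given by its body and head. -/
structure Rule where
  body : Set Atom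
  head : Set Atom

def Rule.frontier (R : Rule) : Set ℕ := varsOf R.body ∩ varsOf R.head
def Rule.exist (R : Rule) : Set ℕ := varsOf R.head \ varsOf R.body

/-- Well-formed rule: finite non-empty body and head, no constants. -/
def WfRule (R : Rule) : Prop :=
  R.body.Finite ∧ R.head.Finite ∧ R.body.Nonempty ∧ R.head.Nonempty ∧
  ∀ t ∈ termsOf (R.body ∪ R.head), ¬ t.isConst

def WfList (L : List Rule) : Prop := ∀ R ∈ L, WfRule R

/-- Restriction of a substitution to a set of variables (default value elsewhere). -/
def restrict (f : ℕ → Term) (F : Set ℕ) : ℕ → Term :=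
  fun v => if v ∈ F then f v else Term.const 0

/-- A semi-oblivious naming of nulls for the rules of `L`: the null created for an
existential variable depends only on the rule and the restriction of the trigger to the
frontier, and distinct such data yield distinct nulls. -/
def SONaming (L : List Rule) (ν : Rule → (ℕ → Term) → ℕ → ℕ) : Prop :=
  (∀ R ∈ L, ∀ f g : ℕ → Term,
      restrict f R.frontier = restrict g R.frontier → ν R f = ν R g) ∧
  (∀ R ∈ L, ∀ R' ∈ L, ∀ f f' x x', ν R f x = ν R' f' x' →
      R = R' ∧ restrict f R.frontier = restrict f' R'.frontier ∧ x = x')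

/-- The safe extension of a trigger `π`, replacing each existential variable by its null. -/
def safeSub (ν : Rule → (ℕ → Term) → ℕ → ℕ) (R : Rule) (π : ℕ → Term) : ℕ → Term :=
  fun y => if y ∈ R.exist then Term.var (ν R (restrict π R.frontier) y) else π y

/-- One breadth-first semi-oblivious chase step. -/
def chaseStep (ν : Rule → (ℕ → Term) → ℕ → ℕ) (L : List Rule) (S : Set Atom) : Set Atom :=
  S ∪ {a | ∃ R ∈ L, ∃ π : ℕ → Term, isHom π R.body S ∧ a ∈ substSet (safeSub ν R π) R.head}

/-- The breadth-first semi-oblivious chase. -/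
def chaseF (ν : Rule → (ℕ → Term) → ℕ → ℕ) (L : List Rule) (I : Set Atom) : ℕ → Set Atom
  | 0 => I
  | k + 1 => chaseStep ν L (chaseF ν L I k)

def chaseInf (ν : Rule → (ℕ → Term) → ℕ → ℕ) (L : List Rule) (I : Set Atom) : Set Atom :=
  ⋃ k, chaseF ν L I k

/-- `L'` parallelises `L`. -/
def Parallelises (L' L : List Rule) : Prop :=
  ∀ ν ν', SONaming L ν → SONaming L' ν' → ∀ I, IsInstance I →
    (∃ σ, isInjHom σ (chaseInf ν L I) (chaseF ν' L' I 1)) ∧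
    (∃ σ, isHom σ (chaseF ν' L' I 1) (chaseInf ν L I))

def Parallelisable (L : List Rule) : Prop := ∃ L', WfList L' ∧ Parallelises L' L

/-- Boundedness of the semi-oblivious chase, uniformly over all instances. -/
def Bounded (L : List Rule) : Prop :=
  ∃ k, ∀ ν, SONaming L ν → ∀ I, IsInstance I → chaseF ν L I k = chaseInf ν L I

def ChaseFinite (L : List Rule) : Prop :=
  ∀ ν, SONaming L ν → ∀ I, IsInstance I → ∃ k, chaseF ν L I k = chaseInf ν L I

/-- Two atoms are `T`-linked if they share a term of `T`. -/
def linked (T : Set Term) (a b : Atom) : Prop := ∃ t ∈ T, t ∈ a.terms ∧ t ∈ b.terms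

/-- Connectivity in `S` by a path of atoms where consecutive atoms share a term of `T`. -/
def connectedIn (S : Set Atom) (T : Set Term) (a b : Atom) : Prop :=
  a ∈ S ∧ b ∈ S ∧ Relation.ReflTransGen (fun x y => x ∈ S ∧ y ∈ S ∧ linked T x y) a b

/-- `P` is closed in `S` w.r.t. `T`-linkedness. -/
def closedIn (S : Set Atom) (T : Set Term) (P : Set Atom) : Prop :=
  ∀ a ∈ S, ∀ b ∈ P, linked T a b → a ∈ P

/-- A piece of `S` w.r.t. `T`: a non-empty subset closed under `T`-linkedness and minimal such. -/
def IsPiece (S : Set Atom) (T : Set Term) (P : Set Atom) : Prop :=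
  P.Nonempty ∧ P ⊆ S ∧ closedIn S T P ∧
  ∀ P', P' ⊆ P → P'.Nonempty → closedIn S T P' → P' = P

/-- A single-piece rule: its head is a piece of itself w.r.t. its existential variables. -/
def SinglePiece (R : Rule) : Prop := IsPiece R.head (Term.var '' R.exist) R.head

/-- The rule used at step `k` of a derivation. -/
def ruleAt (L : List Rule) (r : ℕ → ℕ) (k : ℕ) : Rule := L.getD (r k) ⟨∅, ∅⟩

/-- The set of atoms produced by the `k`-th rule application of a derivation. -/
def producedAt (ν : Rule → (ℕ → Term) → ℕ → ℕ) (L : List Rule) (r : ℕ → ℕ)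
    (π : ℕ → ℕ → Term) (k : ℕ) : Set Atom :=
  substSet (safeSub ν (ruleAt L r k) (π k)) (ruleAt L r k).head

def derivState (ν : Rule → (ℕ → Term) → ℕ → ℕ) (L : List Rule) (I : Set Atom)
    (r : ℕ → ℕ) (π : ℕ → ℕ → Term) : ℕ → Set Atom
  | 0 => I
  | k + 1 => derivState ν L I r π k ∪ producedAt ν L r π k

/-- An `R`-derivation of length `n` from `I`: each step applies a trigger. -/
def IsDeriv (ν : Rule → (ℕ → Term) → ℕ → ℕ) (L : List Rule) (I : Set Atom) (n : ℕ)
    (r : ℕ → ℕ) (π : ℕ → ℕ → Term) : Prop :=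
  ∀ k < n, r k < L.length ∧ isHom (π k) (ruleAt L r k).body (derivState ν L I r π k)

/-- A pieceful derivation: each trigger maps its rule's frontier entirely into the terms of
the initial instance, or entirely into the terms produced by a single earlier application. -/
def PiecefulDeriv (ν : Rule → (ℕ → Term) → ℕ → ℕ) (L : List Rule) (I : Set Atom) (n : ℕ)
    (r : ℕ → ℕ) (π : ℕ → ℕ → Term) : Prop :=
  ∀ k < n, (∀ x ∈ (ruleAt L r k).frontier, π k x ∈ termsOf I) ∨
    ∃ j < k, ∀ x ∈ (ruleAt L r k).frontier, π k x ∈ termsOf (producedAt ν L r π j)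

/-- A pieceful rule set: every derivation from every instance is pieceful. -/
def PiecefulSet (L : List Rule) : Prop :=
  ∀ ν, SONaming L ν → ∀ I, IsInstance I → ∀ n r π,
    IsDeriv ν L I n r π → PiecefulDeriv ν L I n r π

/-- First-order structures for the semantics of rules. -/
structure Struct where
  D : Type
  nonempty : Nonempty D
  interp : ℕ → List D → Prop
  cinterp : ℕ → D

def evalT (M : Struct) (v : ℕ → M.D) : Term → M.D
  | .const c => M.cinterp c
  | .var x => v x

def holdsA (M : Struct) (v : ℕ → M.D) (a : Atom) : Prop :=
  M.interp a.pred (a.args.map (evalT M v))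

/-- Satisfaction of (the universal-existential closure of) a rule in a structure. -/
def satRule (M : Struct) (R : Rule) : Prop :=
  ∀ v : ℕ → M.D, (∀ a ∈ R.body, holdsA M v a) →
    ∃ w : ℕ → M.D, (∀ x ∈ varsOf R.body, w x = v x) ∧ ∀ a ∈ R.head, holdsA M w a

/-- Separating variables of `S' ⊆ S`: variables occurring both in `S'` and in `S \ S'`. -/
def sepVars (S' S : Set Atom) : Set ℕ := varsOf S' ∩ varsOf (S \ S')

/-- A piece-unifier `(S', H', u)` of a set of atoms `S` with a rule `R`. -/
def IsPieceUnifier (S : Set Atom) (R : Rule) (S' H' : Set Atom) (u : ℕ → Term) : Prop :=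
  Disjoint (varsOf S) (varsOf (R.body ∪ R.head)) ∧
  S'.Nonempty ∧ S' ⊆ S ∧ H' ⊆ R.head ∧
  (∀ x, x ∉ R.frontier ∪ varsOf S' → u x = Term.var x) ∧
  (∀ x ∈ R.frontier ∪ varsOf S', ∃ y ∈ varsOf R.head, u x = Term.var y) ∧
  (∀ x ∈ R.frontier, ∃ y ∈ R.frontier, u x = Term.var y) ∧
  (∀ x ∈ sepVars S' S, ∃ y ∈ R.frontier, u x = Term.var y) ∧
  substSet u S' = substSet u H'

/-- The existential stability property of a piece-unifier of `body R2` with `R1`. -/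
def StableUnifier (R2 R1 : Rule) (B2' : Set Atom) (u : ℕ → Term) : Prop :=
  (∀ x ∈ R2.frontier, u x ∉ Term.var '' R1.exist) ∨ R2.frontier ⊆ varsOf B2'

/-- The existential composition `R2 ∘_μ R1` w.r.t. a piece-unifier `μ = (B2', H1', u)`
of `body R2` with `R1`. -/
def compose (R2 R1 : Rule) (B2' : Set Atom) (u : ℕ → Term) : Rule :=
  if ∀ x ∈ R2.frontier, u x ∉ Term.var '' R1.exist then
    ⟨substSet u R1.body ∪ substSet u (R2.body \ B2'), substSet u R2.head⟩
  else
    ⟨substSet u R1.body ∪ substSet u (R2.body \ B2'),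
     substSet u R1.head ∪ substSet u R2.head⟩

/-- The closure `R*` of a rule set under existential composition. -/
inductive InClosure (𝒮 : Set Rule) : Rule → Prop
  | base {R : Rule} : R ∈ 𝒮 → InClosure 𝒮 R
  | comp {Ri Rj : Rule} {B' H' : Set Atom} {u : ℕ → Term} :
      InClosure 𝒮 Ri → InClosure 𝒮 Rj →
      IsPieceUnifier Ri.body Rj B' H' u → InClosure 𝒮 (compose Ri Rj B' u)

def ruleSet (L : List Rule) : Set Rule := {R | R ∈ L}

/-- The stability property for a (possibly infinite) rule set. -/
def StableSet (𝒮 : Set Rule) : Prop :=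
  ∀ R1 ∈ 𝒮, ∀ R2 ∈ 𝒮, ∀ B2' H1' u,
    IsPieceUnifier R2.body R1 B2' H1' u → StableUnifier R2 R1 B2' u

/-- `J` is a result of one breadth-first chase step of a (possibly infinite) rule set on `I`,
with fresh pairwise-compatible nulls (semi-oblivious naming). -/
def OneStepResult (𝒮 : Set Rule) (I J : Set Atom) : Prop :=
  ∃ ν : Rule → (ℕ → Term) → ℕ → ℕ,
    (∀ R ∈ 𝒮, ∀ f x, Term.var (ν R f x) ∉ termsOf I) ∧
    (∀ R ∈ 𝒮, ∀ R' ∈ 𝒮, ∀ f f' x x', ν R f x = ν R' f' x' →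
        R = R' ∧ restrict f R.frontier = restrict f' R'.frontier ∧ x = x') ∧
    J = I ∪ {a | ∃ R ∈ 𝒮, ∃ π : ℕ → Term, isHom π R.body I ∧
                  a ∈ substSet (safeSub ν R π) R.head}

/-- `I, R ⊨ q` for a Boolean conjunctive query `q` (a set of atoms). -/
def Entails (L : List Rule) (I q : Set Atom) : Prop :=
  ∀ ν, SONaming L ν → ∃ k σ, isHom σ q (chaseF ν L I k)

/-- The null `t` occurs in at least `n` atoms of `S`. -/
def occursInAtLeast (S : Set Atom) (t : Term) (n : ℕ) : Prop :=
  ∃ F : Set Atom, F ⊆ {a | a ∈ S ∧ t ∈ a.terms} ∧ F.Finite ∧ n ≤ F.ncard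

def FrontierGuarded (R : Rule) : Prop := ∃ a ∈ R.body, R.frontier ⊆ a.vars

def IsDatalog (R : Rule) : Prop := R.exist = ∅ ∧ ∃ a, R.head = {a}

end ER
namespace ER

/-! ### Auxiliary lemmas -/

lemma mem_termsOf {S : Set Atom} {t : Term} :
    t ∈ termsOf S ↔ ∃ a ∈ S, t ∈ a.args := by
  simp [termsOf, Atom.terms]

lemma mem_varsOf {S : Set Atom} {v : ℕ} :
    v ∈ varsOf S ↔ ∃ a ∈ S, Term.var v ∈ a.args := by
  simp [varsOf, Atom.vars]

lemma Atom.vars_finite (a : Atom) : a.vars.Finite := by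
  have h : a.vars ⊆ Term.var ⁻¹' {t | t ∈ a.args} := fun v hv => hv
  refine Set.Finite.subset (Set.Finite.preimage ?_ a.args.finite_toSet) h
  intro x _ y _ hxy
  exact Term.var.inj hxy

lemma varsOf_finite {S : Set Atom} (hS : S.Finite) : (varsOf S).Finite :=
  Set.Finite.biUnion hS (fun a _ => a.vars_finite)

lemma frontier_finite {R : Rule} (hR : WfRule R) : R.frontier.Finite :=
  Set.Finite.subset (varsOf_finite hR.1) Set.inter_subset_left

/-- An injective encoding of terms into ℕ. -/
def encT : Term → ℕ
  | .const c => 2 * c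
  | .var v => 2 * v + 1

lemma encT_inj : Function.Injective encT := by
  intro a b hab
  cases a <;> cases b <;> simp_all [encT] <;> omega

noncomputable def flist (R : Rule) (hf : R.frontier.Finite) : List ℕ := hf.toFinset.toList

lemma mem_flist {R : Rule} (hf : R.frontier.Finite) {v : ℕ} :
    v ∈ flist R hf ↔ v ∈ R.frontier := by
  simp [flist, Set.Finite.mem_toFinset]

noncomputable def ruleIdx (L' : List Rule) (R : Rule) (hR : R ∈ L') : ℕ :=
  (Classical.choose (List.mem_iff_get.mp hR)).val

lemma get_ruleIdx (L' : List Rule) (R : Rule) (hR : R ∈ L') :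
    ∃ h : ruleIdx L' R hR < L'.length, L'.get ⟨ruleIdx L' R hR, h⟩ = R := by
  have h := Classical.choose_spec (List.mem_iff_get.mp hR)
  exact ⟨(Classical.choose (List.mem_iff_get.mp hR)).isLt, h⟩

lemma ruleIdx_inj {L' : List Rule} {R R' : Rule} (hR : R ∈ L') (hR' : R' ∈ L')
    (h : ruleIdx L' R hR = ruleIdx L' R' hR') : R = R' := by
  obtain ⟨h1, e1⟩ := get_ruleIdx L' R hR
  obtain ⟨h2, e2⟩ := get_ruleIdx L' R' hR'
  rw [← e1, ← e2]
  congr 1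
  exact Fin.ext h

/-- A concrete semi-oblivious naming for a well-formed rule list. -/
noncomputable def mkNaming (L' : List Rule) (hL' : WfList L') :
    Rule → (ℕ → Term) → ℕ → ℕ :=
  fun R f x =>
    if hR : R ∈ L' then
      Nat.pair (ruleIdx L' R hR)
        (Nat.pair (Encodable.encode ((flist R (frontier_finite (hL' R hR))).map
          (fun v => encT (restrict f R.frontier v)))) x)
    else 0

lemma restrict_restrict (f : ℕ → Term) (F : Set ℕ) :
    restrict (restrict f F) F = restrict f F := by
  funext v; by_cases hv : v ∈ F <;> simp [restrict, hv]

lemma mkNaming_sonaming (L' : List Rule) (hL' : WfList L') :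
    SONaming L' (mkNaming L' hL') := by
  constructor
  · intro R hR f g hfg
    funext x
    simp only [mkNaming, dif_pos hR, hfg]
  · intro R hR R' hR' f f' x x' hfe
    simp only [mkNaming, dif_pos hR, dif_pos hR'] at hfe
    obtain ⟨h1, h2⟩ := Nat.pair_eq_pair.mp hfe
    obtain ⟨h3, h4⟩ := Nat.pair_eq_pair.mp h2
    have hRR : R = R' := ruleIdx_inj hR hR' h1
    subst hRR
    refine ⟨rfl, ?_, h4⟩
    have h5 := Encodable.encode_injective h3
    have h6 := List.map_inj_left.mp h5
    funext v
    by_cases hv : v ∈ R.frontier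
    · exact encT_inj (h6 v ((mem_flist _).mpr hv))
    · simp [restrict, hv]

lemma varsOf_body_mem {R : Rule} {π : ℕ → Term} {S : Set Atom}
    (hhom : isHom π R.body S) {y : ℕ} (hy : y ∈ varsOf R.body) : π y ∈ termsOf S := by
  obtain ⟨c, hc, hyc⟩ := mem_varsOf.mp hy
  refine mem_termsOf.mpr ⟨Atom.subst π c, hhom ⟨c, hc, rfl⟩, ?_⟩
  have h : Term.subst π (Term.var y) ∈ (Atom.subst π c).args :=
    List.mem_map.mpr ⟨_, hyc, rfl⟩
  simpa [Term.subst] using h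

/-- Any term of an atom produced by a trigger is either a fresh null determined by the rule
and the frontier restriction, or a term of the base set. -/
lemma prod_term {ν : Rule → (ℕ → Term) → ℕ → ℕ} {R : Rule} {π : ℕ → Term} {S : Set Atom}
    (hwf : WfRule R) (hhom : isHom π R.body S) {a : Atom}
    (ha : a ∈ substSet (safeSub ν R π) R.head) {u : Term} (hu : u ∈ a.args) :
    (∃ y ∈ R.exist, u = Term.var (ν R (restrict π R.frontier) y)) ∨ u ∈ termsOf S := by
  obtain ⟨b, hb, rfl⟩ := ha
  simp only [Atom.subst, List.mem_map] at hu
  obtain ⟨s, hs, rfl⟩ := hu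
  have hsv : ¬ s.isConst := hwf.2.2.2.2 s (mem_termsOf.mpr ⟨b, Set.mem_union_right _ hb, hs⟩)
  cases s with
  | const c => exact absurd trivial hsv
  | var y =>
    have hyh : y ∈ varsOf R.head := mem_varsOf.mpr ⟨b, hb, hs⟩
    by_cases hy : y ∈ R.exist
    · exact Or.inl ⟨y, hy, by simp [Term.subst, safeSub, hy]⟩
    · right
      have hyb : y ∈ varsOf R.body := by
        by_contra hnb
        exact hy ⟨hyh, hnb⟩
      have h : Term.subst (safeSub ν R π) (Term.var y) = π y := by
        simp [Term.subst, safeSub, hy]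
      rw [h]
      exact varsOf_body_mem hhom hyb

/-- Two triggers of the same rule with equal frontier restrictions produce equal head images. -/
lemma safeSub_head_congr {ν : Rule → (ℕ → Term) → ℕ → ℕ} {R : Rule} {π π' : ℕ → Term}
    (hwf : WfRule R) (hres : restrict π R.frontier = restrict π' R.frontier) :
    ∀ b ∈ R.head, Atom.subst (safeSub ν R π) b = Atom.subst (safeSub ν R π') b := by
  intro b hb
  simp only [Atom.subst, Atom.mk.injEq, true_and]
  apply List.map_congr_left
  intro s hs
  have hsv : ¬ s.isConst := hwf.2.2.2.2 s (mem_termsOf.mpr ⟨b, Set.mem_union_right _ hb, hs⟩)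
  cases s with
  | const c => exact absurd trivial hsv
  | var y =>
    have hyh : y ∈ varsOf R.head := mem_varsOf.mpr ⟨b, hb, hs⟩
    by_cases hy : y ∈ R.exist
    · simp [Term.subst, safeSub, hy, hres]
    · have hyb : y ∈ varsOf R.body := by
        by_contra hnb
        exact hy ⟨hyh, hnb⟩
      have hyf : y ∈ R.frontier := ⟨hyb, hyh⟩
      have h1 : π y = restrict π R.frontier y := by simp [restrict, hyf]
      have h2 : π' y = restrict π' R.frontier y := by simp [restrict, hyf]
      simp [Term.subst, safeSub, hy, h1, h2, hres]

lemma mem_chase1 {ν' : Rule → (ℕ → Term) → ℕ → ℕ} {L' : List Rule} {I : Set Atom} {a : Atom} :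
    a ∈ chaseF ν' L' I 1 ↔
      a ∈ I ∨ ∃ R ∈ L', ∃ π, isHom π R.body I ∧ a ∈ substSet (safeSub ν' R π) R.head := by
  show a ∈ chaseStep ν' L' I ↔ _
  simp [chaseStep]

lemma list_map_injOn {f : Term → Term} {S : Set Term} (hf : Set.InjOn f S) :
    ∀ l1 l2 : List Term, (∀ x ∈ l1, x ∈ S) → (∀ x ∈ l2, x ∈ S) →
      l1.map f = l2.map f → l1 = l2 := by
  intro l1
  induction l1 with
  | nil => intro l2 _ _ he; cases l2 <;> simp_all
  | cons x l ih =>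
    intro l2 h1 h2 he
    cases l2 with
    | nil => simp at he
    | cons y m =>
      simp only [List.map_cons, List.cons.injEq] at he
      have hx : x = y := hf (h1 x (by simp)) (h2 y (by simp)) he.1
      rw [hx, ih m (fun z hz => h1 z (by simp [hz])) (fun z hz => h2 z (by simp [hz])) he.2]

end ER
namespace ER
/-- if `L'` parallelises `L` and every head of `L'` has at most `h` atoms,
then every null of the chase occurs in at most `h` atoms. -/
theorem null_occurrence_bound (L L' : List Rule) (hL : WfList L) (hL' : WfList L')
    (hpar : Parallelises L' L) (h : ℕ) (hh : ∀ R ∈ L', R.head.ncard ≤ h) :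
    ∀ ν, SONaming L ν → ∀ I, IsInstance I →
      ∀ t ∈ nullsOf (chaseInf ν L I),
        {a | a ∈ chaseInf ν L I ∧ t ∈ a.terms}.Finite ∧
        {a | a ∈ chaseInf ν L I ∧ t ∈ a.terms}.ncard ≤ h := by
  intro ν hν I hI t ht
  classical
  have hν' := mkNaming_sonaming L' hL'
  set ν' := mkNaming L' hL' with hν'def
  obtain ⟨⟨σ, hσ, hσinj⟩, -⟩ := hpar ν ν' hν hν' I hI
  set C := chaseInf ν L I with hC
  obtain ⟨htm, htc⟩ := ht
  obtain ⟨a₀, ha₀C, ha₀t⟩ := mem_termsOf.mp htm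
  obtain ⟨v, rfl⟩ : ∃ v, t = Term.var v := by
    cases t with
    | const c => exact absurd trivial htc
    | var v => exact ⟨v, rfl⟩
  set u := Term.subst σ (Term.var v) with hu
  have hIsub : termsOf I ⊆ termsOf C := by
    intro x hx
    obtain ⟨a, ha, hxa⟩ := mem_termsOf.mp hx
    exact mem_termsOf.mpr ⟨a, Set.mem_iUnion.mpr ⟨0, ha⟩, hxa⟩
  have huI : u ∉ termsOf I := by
    intro hmem
    have hconst : u.isConst := hI.2 u hmem
    have heq : Term.subst σ u = u := by
      rcases u with c | w
      · simp [Term.subst]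
      · simp [Term.isConst] at hconst
    have hut : u = Term.var v := hσinj (hIsub hmem) htm (heq.trans hu)
    rw [hut] at hconst
    exact htc hconst
  have hmapC : ∀ a ∈ C, Atom.subst σ a ∈ chaseF ν' L' I 1 := fun a ha => hσ ⟨a, ha, rfl⟩
  have hmapt : ∀ a ∈ C, Term.var v ∈ a.args → u ∈ (Atom.subst σ a).args := by
    intro a _ hta
    exact List.mem_map.mpr ⟨_, hta, hu.symm⟩
  have hkey : ∀ b ∈ chaseF ν' L' I 1, u ∈ b.args →
      ∃ R ∈ L', ∃ π, isHom π R.body I ∧ b ∈ substSet (safeSub ν' R π) R.head ∧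
        ∃ y ∈ R.exist, u = Term.var (ν' R (restrict π R.frontier) y) := by
    intro b hb hub
    rcases mem_chase1.mp hb with hbI | ⟨R, hR, π, hπ, hbp⟩
    · exact absurd (mem_termsOf.mpr ⟨b, hbI, hub⟩) huI
    · rcases prod_term (hL' R hR) hπ hbp hub with ⟨y, hy, he⟩ | hmem
      · exact ⟨R, hR, π, hπ, hbp, y, hy, he⟩
      · exact absurd hmem huI
  obtain ⟨R₀, hR₀, π₀, hπ₀, hb₀p, y₀, hy₀, he₀⟩ :=
    hkey _ (hmapC a₀ ha₀C) (hmapt a₀ ha₀C ha₀t)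
  have hPfin : (substSet (safeSub ν' R₀ π₀) R₀.head).Finite := ((hL' R₀ hR₀).2.1).image _
  have hPcard : (substSet (safeSub ν' R₀ π₀) R₀.head).ncard ≤ h :=
    le_trans (Set.ncard_image_le ((hL' R₀ hR₀).2.1)) (hh R₀ hR₀)
  have hBP : ∀ b ∈ chaseF ν' L' I 1, u ∈ b.args → b ∈ substSet (safeSub ν' R₀ π₀) R₀.head := by
    intro b hb hub
    obtain ⟨R, hR, π, hπ, hbp, y, hy, he⟩ := hkey b hb hub
    obtain ⟨hRR, hres, -⟩ := hν'.2 R hR R₀ hR₀ _ _ _ _ (Term.var.inj (he.symm.trans he₀))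
    subst hRR
    rw [restrict_restrict, restrict_restrict] at hres
    obtain ⟨c, hc, rfl⟩ := hbp
    exact ⟨c, hc, (safeSub_head_congr (hL' _ hR) hres c hc).symm⟩
  have hinjA : Set.InjOn (Atom.subst σ) {a | a ∈ C ∧ Term.var v ∈ a.terms} := by
    intro a ha b hb hab
    have h1 := congrArg Atom.pred hab
    have h2 := congrArg Atom.args hab
    simp only [Atom.subst] at h1 h2
    have h3 : a.args = b.args :=
      list_map_injOn hσinj _ _ (fun x hx => mem_termsOf.mpr ⟨a, ha.1, hx⟩)
        (fun x hx => mem_termsOf.mpr ⟨b, hb.1, hx⟩) h2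
    cases a; cases b; simp_all
  have hmapsP : ∀ a ∈ {a | a ∈ C ∧ Term.var v ∈ a.terms},
      Atom.subst σ a ∈ substSet (safeSub ν' R₀ π₀) R₀.head := by
    intro a ha
    exact hBP _ (hmapC a ha.1) (hmapt a ha.1 ha.2)
  have hfin : {a | a ∈ C ∧ Term.var v ∈ a.terms}.Finite := by
    have himg : (Atom.subst σ '' {a | a ∈ C ∧ Term.var v ∈ a.terms}).Finite :=
      hPfin.subset (by rintro _ ⟨a, ha, rfl⟩; exact hmapsP a ha)
    exact Set.Finite.of_finite_image himg hinjA
  refine ⟨hfin, ?_⟩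
  calc {a | a ∈ C ∧ Term.var v ∈ a.terms}.ncard
      ≤ (substSet (safeSub ν' R₀ π₀) R₀.head).ncard :=
        Set.ncard_le_ncard_of_injOn _ hmapsP hinjA hPfin
    _ ≤ h := hPcard
end ER
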